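/- Let B be a unital Banach algebra with the inner derivation property and Δ a 2-local derivation on M_2(B) vanishing on the span of the four matrix units and on all diagonal matrices. Then the diagonal entries of Δ(x) vanish for every x ∈ M_2(B): e_{1,1}Δ(x)e_{1,1} = 0 and e_{2,2}Δ(x)e_{2,2} = 0. -/

import Mathlib

open Matrix

def IsDerivation {A : Type*} [Ring A] [Algebra ℂ A] (D : A → A) : Prop :=
  (∀ x y, D (x + y) = D x + D y) ∧ (∀ (c : ℂ) (x), D (c • x) = c • D x) ∧
  (∀ x y, D (x * y) = D x * y + x * D y)

def Is2LocalDerivation {A : Type*} [Ring A] [Algebra ℂ A] (Δ : A → A) : Prop :=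
  ∀ x y, ∃ D, IsDerivation D ∧ Δ x = D x ∧ Δ y = D y

def HasInnerDerivationProperty (A : Type*) [Ring A] [Algebra ℂ A] : Prop :=
  ∀ D : A → A, IsDerivation D → ∃ a : A, ∀ x, D x = a * x - x * a

/-- `Δ` vanishes on the linear span of the matrix units. -/
def VanishesOnUnits {A : Type*} [Ring A] [Algebra ℂ A] {n : ℕ}
    (Δ : Matrix (Fin n) (Fin n) A → Matrix (Fin n) (Fin n) A) : Prop :=
  ∀ x ∈ Submodule.span ℂ (Set.range fun p : Fin n × Fin n =>
      Matrix.single p.1 p.2 (1 : A)), Δ x = 0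
/-- `Δ` vanishes on all diagonal matrices. -/
def VanishesOnDiag {A : Type*} [Ring A] [Algebra ℂ A] {n : ℕ}
    (Δ : Matrix (Fin n) (Fin n) A → Matrix (Fin n) (Fin n) A) : Prop :=
  ∀ x : Matrix (Fin n) (Fin n) A, (∀ i j : Fin n, i ≠ j → x i j = 0) → Δ x = 0

lemma matrix_derivation_inner {B : Type*} [Ring B] [Algebra ℂ B]
    (hidp : HasInnerDerivationProperty B)
    (D : Matrix (Fin 2) (Fin 2) B → Matrix (Fin 2) (Fin 2) B)
    (hD : IsDerivation D) :
    ∃ A, ∀ x, D x = A * x - x * A := by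
  obtain ⟨hadd, hsmul, hmul⟩ := hD
  set u : Fin 2 → Fin 2 → Matrix (Fin 2) (Fin 2) B :=
    fun i j => single i j (1 : B) with hu
  have hone : D 1 = 0 := by
    have h := hmul 1 1
    rw [mul_one, mul_one, one_mul] at h
    nth_rewrite 1 [← add_zero (D 1)] at h
    exact (add_left_cancel h).symm
  have hkey : (1 : Matrix (Fin 2) (Fin 2) B) = u 0 0 * u 0 0 + u 1 0 * u 0 1 := by
    ext i j
    fin_cases i <;> fin_cases j <;>
      simp [hu, Matrix.one_apply]
  set a : Matrix (Fin 2) (Fin 2) B := D (u 0 0) * u 0 0 + D (u 1 0) * u 0 1 with ha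
  have ha2 : a = -(u 0 0 * D (u 0 0) + u 1 0 * D (u 0 1)) := by
    have h0 : (0 : Matrix (Fin 2) (Fin 2) B)
        = D (u 0 0 * u 0 0) + D (u 1 0 * u 0 1) := by
      rw [← hadd, ← hkey, hone]
    rw [hmul, hmul] at h0
    have := h0
    rw [ha]
    abel_nf
    abel_nf at h0
    linear_combination (norm := abel) -h0
  -- products of units
  have hA : ∀ i j : Fin 2, a * u i j = D (u i 0) * u 0 j := by
    intro i j
    rw [ha, add_mul, mul_assoc, mul_assoc]
    rcases (by decide : ∀ k : Fin 2, k = 0 ∨ k = 1) i with rfl | rfl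
    · rw [show u 0 0 * u 0 j = u 0 j by simp [hu],
        show u 0 1 * u 0 j = 0 from single_mul_single_of_ne _ _ _ _ (by decide) _,
        mul_zero, add_zero]
    · rw [show u 0 0 * u 1 j = 0 from single_mul_single_of_ne _ _ _ _ (by decide) _,
        show u 0 1 * u 1 j = u 0 j by simp [hu], mul_zero, zero_add]
  have hB : ∀ i j : Fin 2, u i j * a = -(u i 0 * D (u 0 j)) := by
    intro i j
    rw [ha2, mul_neg, mul_add, ← mul_assoc, ← mul_assoc]
    rcases (by decide : ∀ k : Fin 2, k = 0 ∨ k = 1) j with rfl | rfl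
    · rw [show u i 0 * u 0 0 = u i 0 by simp [hu],
        show u i 0 * u 1 0 = 0 from single_mul_single_of_ne _ _ _ _ (by decide) _,
        zero_mul, add_zero]
    · rw [show u i 1 * u 0 0 = 0 from single_mul_single_of_ne _ _ _ _ (by decide) _,
        show u i 1 * u 1 0 = u i 0 by simp [hu], zero_mul, zero_add]
  have hunit : ∀ i j : Fin 2, D (u i j) = a * u i j - u i j * a := by
    intro i j
    rw [hA, hB, sub_neg_eq_add]
    have : u i j = u i 0 * u 0 j := by simp [hu]
    rw [this, hmul]
  -- the corrected derivation
  set D' : Matrix (Fin 2) (Fin 2) B → Matrix (Fin 2) (Fin 2) B :=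
    fun x => D x - (a * x - x * a) with hD'
  have hD'add : ∀ x y, D' (x + y) = D' x + D' y := by
    intro x y; simp only [hD', hadd, mul_add, add_mul]; abel
  have hD'smul : ∀ (c : ℂ) x, D' (c • x) = c • D' x := by
    intro c x
    simp only [hD', hsmul, mul_smul_comm, smul_mul_assoc, smul_sub]
  have hD'mul : ∀ x y, D' (x * y) = D' x * y + x * D' y := by
    intro x y
    simp only [hD', hmul]
    noncomm_ring
  have hD'unit : ∀ i j : Fin 2, D' (u i j) = 0 := by
    intro i j; simp only [hD', hunit, sub_self]
  have hcorner : ∀ m : Matrix (Fin 2) (Fin 2) B,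
      u 0 0 * m * u 0 0 = single 0 0 (m 0 0) := by
    intro m
    ext i j
    fin_cases i <;> fin_cases j <;>
      simp [hu, Matrix.mul_apply, single, Fin.sum_univ_two]
  set d : B → B := fun b => D' (single 0 0 b) 0 0 with hd
  have hE00 : ∀ b : B, D' (single 0 0 b) = single 0 0 (d b) := by
    intro b
    have h1 : single 0 0 b = u 0 0 * (single 0 0 b * u 0 0) := by
      simp [hu]
    have h2 : D' (single 0 0 b)
        = u 0 0 * D' (single 0 0 b) * u 0 0 := by
      nth_rewrite 1 [h1]
      rw [hD'mul, hD'mul, hD'unit]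
      simp only [zero_mul, mul_zero, add_zero, zero_add, mul_add, ← mul_assoc]
    rw [h2, hcorner]
  have hEij : ∀ (i j : Fin 2) (b : B),
      D' (single i j b) = single i j (d b) := by
    intro i j b
    have h1 : single i j b = u i 0 * (single 0 0 b * u 0 j) := by
      simp [hu]
    rw [h1, hD'mul, hD'mul, hD'unit, hD'unit, hE00]
    simp [hu]
  have hdd : IsDerivation d := by
    refine ⟨?_, ?_, ?_⟩
    · intro b c
      have : single (0:Fin 2) (0:Fin 2) (b + c)
          = single 0 0 b + single 0 0 c := single_add _ _ _ _
      rw [hd]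
      simp only [this, hD'add, Matrix.add_apply]
    · intro c b
      rw [hd]
      simp only [← smul_single, hD'smul, Matrix.smul_apply]
    · intro b c
      have h1 : single (0:Fin 2) (0:Fin 2) (b * c)
          = single 0 0 b * single 0 0 c := by simp
      rw [hd]
      simp only [h1, hD'mul, hE00, Matrix.add_apply]
      simp
  obtain ⟨cc, hcc⟩ := hidp d hdd
  refine ⟨a + Matrix.diagonal (fun _ => cc), fun x => ?_⟩
  have hx : x = single 0 0 (x 0 0) + single 0 1 (x 0 1)
      + single 1 0 (x 1 0) + single 1 1 (x 1 1) := by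
    ext i j
    fin_cases i <;> fin_cases j <;> simp
  have hD'x : D' x = Matrix.diagonal (fun _ => cc) * x - x * Matrix.diagonal (fun _ => cc) := by
    have : D' x = single 0 0 (d (x 0 0)) + single 0 1 (d (x 0 1))
        + single 1 0 (d (x 1 0)) + single 1 1 (d (x 1 1)) := by
      nth_rewrite 1 [hx]
      rw [hD'add, hD'add, hD'add, hEij, hEij, hEij, hEij]
    rw [this]
    ext i j
    fin_cases i <;> fin_cases j <;>
      simp [hcc, Matrix.diagonal_mul, Matrix.mul_diagonal]
  have hfin : D x = D' x + (a * x - x * a) := by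
    show D x = D x - (a * x - x * a) + (a * x - x * a)
    abel
  rw [hfin, hD'x, ha]
  simp only [add_mul, mul_add]
  abel

theorem stmt11 {B : Type*} [NormedRing B] [NormedAlgebra ℂ B] [CompleteSpace B]
    (hidp : HasInnerDerivationProperty B)
    (Δ : Matrix (Fin 2) (Fin 2) B → Matrix (Fin 2) (Fin 2) B)
    (hΔ : Is2LocalDerivation Δ) (hvan : VanishesOnUnits Δ)
    (hdiag : VanishesOnDiag Δ) :
    ∀ x : Matrix (Fin 2) (Fin 2) B, Δ x 0 0 = 0 ∧ Δ x 1 1 = 0 := by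
  intro x
  set c : ℝ := ‖x 0 0‖ + ‖x 1 1‖ + 1 with hc
  set y : Matrix (Fin 2) (Fin 2) B :=
    Matrix.diagonal ![x 0 0, x 1 1 + (c : ℂ) • 1] with hy
  have hyΔ : Δ y = 0 :=
    hdiag y (fun i j hij => Matrix.diagonal_apply_ne _ hij)
  obtain ⟨D, hD, hDx, hDy⟩ := hΔ x y
  obtain ⟨A, hA⟩ := matrix_derivation_inner hidp D hD
  have hAy : A * y = y * A := by
    have h0 : (0 : Matrix (Fin 2) (Fin 2) B) = A * y - y * A := by
      rw [← hA y, ← hDy, hyΔ]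
    exact sub_eq_zero.mp h0.symm
  have hy00 : y 0 0 = x 0 0 := by simp [hy]
  have hy11 : y 1 1 = x 1 1 + (c : ℂ) • 1 := by simp [hy]
  have hy01 : y 0 1 = 0 := Matrix.diagonal_apply_ne _ (by decide)
  have hy10 : y 1 0 = 0 := Matrix.diagonal_apply_ne _ (by decide)
  -- entry (0,1) of hAy
  have e01 : (c : ℂ) • A 0 1 = x 0 0 * A 0 1 - A 0 1 * x 1 1 := by
    have h := congr_fun (congr_fun hAy 0) 1
    rw [Matrix.mul_apply, Matrix.mul_apply, Fin.sum_univ_two, Fin.sum_univ_two,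
      hy00, hy11, hy01] at h
    rw [zero_mul, mul_zero, zero_add, add_zero, mul_add, mul_smul_comm, mul_one] at h
    exact eq_sub_of_add_eq' h
  have e10 : (c : ℂ) • A 1 0 = A 1 0 * x 0 0 - x 1 1 * A 1 0 := by
    have h := congr_fun (congr_fun hAy 1) 0
    rw [Matrix.mul_apply, Matrix.mul_apply, Fin.sum_univ_two, Fin.sum_univ_two,
      hy00, hy11, hy10] at h
    rw [mul_zero, zero_mul, add_zero, zero_add, add_mul, smul_mul_assoc, one_mul] at h
    exact eq_sub_of_add_eq' h.symm
  have hcnorm : ∀ q : B, ‖(c : ℂ) • q‖ = c * ‖q‖ := by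
    intro q
    rw [norm_smul, Complex.norm_real, Real.norm_of_nonneg (by positivity)]
  have hq0 : A 0 1 = 0 := by
    have h1 : c * ‖A 0 1‖ ≤ (‖x 0 0‖ + ‖x 1 1‖) * ‖A 0 1‖ := by
      rw [← hcnorm, e01]
      calc ‖x 0 0 * A 0 1 - A 0 1 * x 1 1‖
          ≤ ‖x 0 0 * A 0 1‖ + ‖A 0 1 * x 1 1‖ := norm_sub_le _ _
        _ ≤ ‖x 0 0‖ * ‖A 0 1‖ + ‖A 0 1‖ * ‖x 1 1‖ :=
            add_le_add (norm_mul_le _ _) (norm_mul_le _ _)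
        _ = (‖x 0 0‖ + ‖x 1 1‖) * ‖A 0 1‖ := by ring
    have h2 : ‖A 0 1‖ ≤ 0 := by nlinarith [norm_nonneg (A 0 1)]
    exact norm_le_zero_iff.mp h2
  have hr0 : A 1 0 = 0 := by
    have h1 : c * ‖A 1 0‖ ≤ (‖x 0 0‖ + ‖x 1 1‖) * ‖A 1 0‖ := by
      rw [← hcnorm, e10]
      calc ‖A 1 0 * x 0 0 - x 1 1 * A 1 0‖
          ≤ ‖A 1 0 * x 0 0‖ + ‖x 1 1 * A 1 0‖ := norm_sub_le _ _
        _ ≤ ‖A 1 0‖ * ‖x 0 0‖ + ‖x 1 1‖ * ‖A 1 0‖ :=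
            add_le_add (norm_mul_le _ _) (norm_mul_le _ _)
        _ = (‖x 0 0‖ + ‖x 1 1‖) * ‖A 1 0‖ := by ring
    have h2 : ‖A 1 0‖ ≤ 0 := by nlinarith [norm_nonneg (A 1 0)]
    exact norm_le_zero_iff.mp h2
  have e00 : A 0 0 * x 0 0 = x 0 0 * A 0 0 := by
    have h := congr_fun (congr_fun hAy 0) 0
    rw [Matrix.mul_apply, Matrix.mul_apply, Fin.sum_univ_two, Fin.sum_univ_two,
      hy00, hy01, hy10] at h
    rwa [mul_zero, zero_mul, add_zero, add_zero] at h
  have e11 : A 1 1 * x 1 1 = x 1 1 * A 1 1 := by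
    have h := congr_fun (congr_fun hAy 1) 1
    rw [Matrix.mul_apply, Matrix.mul_apply, Fin.sum_univ_two, Fin.sum_univ_two,
      hy11, hy01, hy10] at h
    rw [mul_zero, zero_mul, zero_add, zero_add, mul_add, add_mul,
      mul_smul_comm, smul_mul_assoc, mul_one, one_mul] at h
    exact add_right_cancel h
  constructor
  · rw [hDx, hA x]
    rw [Matrix.sub_apply, Matrix.mul_apply, Matrix.mul_apply,
      Fin.sum_univ_two, Fin.sum_univ_two, hq0, hr0]
    rw [zero_mul, mul_zero, add_zero, add_zero, e00, sub_self]
  · rw [hDx, hA x]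
    rw [Matrix.sub_apply, Matrix.mul_apply, Matrix.mul_apply,
      Fin.sum_univ_two, Fin.sum_univ_two, hq0, hr0]
    rw [zero_mul, mul_zero, zero_add, zero_add, e11, sub_self]
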